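/- Fix H* ∈ (1/2, 1). There exists a constant C > 0, depending only on H*, such that for all h > 0, t > 0, x ∈ ℝ and every sign σ ∈ {+1, -1}, setting F(y) = (2√h)^{-1} G(⌊t⌋_h, 2(⌊x⌋_{2√h} − ⌊y⌋_{2√h}) + σ·τ(⌊t⌋_h)) for y ∈ ℝ, one has H*(2H*-1) ∫_ℝ ∫_ℝ |y - z|^{2H*-2} F(y) F(z) dy dz ≤ C t^{H*-1}. -/

import Mathlib

open MeasureTheory

noncomputable section

/-- `G m n = P(S_m = n)`, the probability mass function of the simple random walk
`S_m = Z_1 + … + Z_m` with i.i.d. steps `Z_i` uniform on `{-1, 1}`. -/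
def rwG (m : ℕ) (n : ℤ) : ℝ :=
  ((Finset.univ.filter fun f : Fin m → Bool =>
      (∑ i, if f i then (1 : ℤ) else -1) = n).card : ℝ) / 2 ^ m

/-- The alternating indicator `τ : ℤ → {0,1}`: `τ(n) = 0` for even `n`, `1` for odd `n`. -/
def altTau (n : ℤ) : ℤ := if Even n then 0 else 1

/-- The rescaled random-walk density
`F(y) = (2√h)⁻¹ G(⌊t⌋_h, 2(⌊x⌋_{2√h} − ⌊y⌋_{2√h}) + σ τ(⌊t⌋_h))`. -/
def rwDensity (h t x : ℝ) (σ : ℤ) (y : ℝ) : ℝ :=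
  1 / (2 * Real.sqrt h) *
    rwG (⌊t / h⌋).toNat
      (2 * (⌊x / (2 * Real.sqrt h)⌋ - ⌊y / (2 * Real.sqrt h)⌋) + σ * altTau ⌊t / h⌋)


lemma centralBinom_sq_le (n : ℕ) : (Nat.centralBinom n)^2 * (2*n+1) ≤ 16^n := by
  induction n with
  | zero => simp [Nat.centralBinom]
  | succ n ih =>
    have key := Nat.succ_mul_centralBinom_succ n
    have hpos : 0 < (n+1)^2 := by positivity
    have h1 : (n+1)^2 * ((Nat.centralBinom (n+1))^2 * (2*(n+1)+1))
        ≤ (n+1)^2 * 16^(n+1) := by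
      calc (n+1)^2 * ((Nat.centralBinom (n+1))^2 * (2*(n+1)+1))
          = ((n+1) * Nat.centralBinom (n+1))^2 * (2*n+3) := by ring
        _ = (2*(2*n+1) * Nat.centralBinom n)^2 * (2*n+3) := by rw [key]
        _ = (4*(2*n+3)*(2*n+1)) * ((Nat.centralBinom n)^2*(2*n+1)) := by ring
        _ ≤ (4*(2*n+3)*(2*n+1)) * 16^n := Nat.mul_le_mul_left _ ih
        _ ≤ ((n+1)^2 * 16) * 16^n := Nat.mul_le_mul_right _ (by nlinarith)
        _ = (n+1)^2 * 16^(n+1) := by ring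
    exact Nat.le_of_mul_le_mul_left h1 hpos

lemma middle_sq_le (m : ℕ) : (m.choose (m/2))^2 * (m+1) ≤ 2 * 4^m := by
  rcases Nat.even_or_odd m with ⟨n, rfl⟩ | ⟨n, rfl⟩
  · have : (n + n) / 2 = n := by omega
    rw [this]
    have h := centralBinom_sq_le n
    have hcb : (n+n).choose n = Nat.centralBinom n := by
      rw [Nat.centralBinom_eq_two_mul_choose]; congr 1; omega
    rw [hcb]
    have h16 : (16:ℕ)^n = 4^(n+n) := by
      rw [show (16:ℕ) = 4^2 by norm_num, ← pow_mul]; congr 1; omega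
    calc (Nat.centralBinom n)^2 * (n+n+1) = (Nat.centralBinom n)^2 * (2*n+1) := by ring_nf
      _ ≤ 16^n := h
      _ = 4^(n+n) := h16
      _ ≤ 2 * 4^(n+n) := Nat.le_mul_of_pos_left _ (by norm_num)
  · have hdiv : (2*n + 1) / 2 = n := by omega
    rw [hdiv]
    have hpascal : (2*n+1).choose n ≤ 2 * Nat.centralBinom n := by
      rcases n with _ | k
      · simp [Nat.centralBinom]
      · have : (2*(k+1)+1) = (2*(k+1)) + 1 := by ring
        rw [this, Nat.choose_succ_succ']
        have h1 : (2*(k+1)).choose k ≤ (2*(k+1)).choose ((2*(k+1))/2) := Nat.choose_le_middle _ _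
        have h2 : (2*(k+1)).choose (k+1) ≤ (2*(k+1)).choose ((2*(k+1))/2) := Nat.choose_le_middle _ _
        have hd : (2*(k+1))/2 = k+1 := by omega
        rw [hd] at h1 h2
        have hcb : (2*(k+1)).choose (k+1) = Nat.centralBinom (k+1) := by
          rw [Nat.centralBinom_eq_two_mul_choose]
        omega
    have h := centralBinom_sq_le n
    have h16 : (16:ℕ)^n * 8 = 2 * 4^(2*n+1) := by
      rw [show (16:ℕ) = 4^2 by norm_num, ← pow_mul]
      rw [show (4:ℕ)^(2*n+1) = 4^(2*n)*4 by ring]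
      ring
    calc ((2*n+1).choose n)^2 * (2*n+1+1)
        ≤ (2 * Nat.centralBinom n)^2 * (2*n+2) := by
          exact Nat.mul_le_mul (Nat.pow_le_pow_left hpascal 2) (by omega)
      _ = (Nat.centralBinom n)^2 * (2*n+2) * 4 := by ring
      _ ≤ (Nat.centralBinom n)^2 * (2*(2*n+1)) * 4 := by
          exact Nat.mul_le_mul_right _ (Nat.mul_le_mul_left _ (by omega))
      _ = ((Nat.centralBinom n)^2 * (2*n+1)) * 8 := by ring
      _ ≤ 16^n * 8 := Nat.mul_le_mul_right _ h
      _ = 2 * 4^(2*n+1) := h16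

def rwA (m : ℕ) (n : ℤ) : Finset (Fin m → Bool) :=
  Finset.univ.filter fun f => (∑ i, if f i then (1 : ℤ) else -1) = n

lemma rwG_eq (m : ℕ) (n : ℤ) : rwG m n = ((rwA m n).card : ℝ) / 2 ^ m := rfl

lemma sum_eq_card (m : ℕ) (f : Fin m → Bool) :
    (∑ i, if f i then (1 : ℤ) else -1)
      = 2 * ((Finset.univ.filter fun i => f i = true).card : ℤ) - m := by
  have : ∀ i : Fin m, (if f i then (1 : ℤ) else -1)
      = 2 * (if f i = true then (1:ℤ) else 0) - 1 := by
    intro i; by_cases hi : f i <;> simp [hi]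
  rw [Finset.sum_congr rfl fun i _ => this i, Finset.sum_sub_distrib, ← Finset.mul_sum]
  simp [Finset.sum_ite_eq]

lemma rwA_card_le (m : ℕ) (n : ℤ) : (rwA m n).card ≤ m.choose (m/2) := by
  set k : ℕ := ((n + m)/2).toNat with hk
  have hsub : ∀ f ∈ rwA m n, (Finset.univ.filter fun i => f i = true) ∈
      Finset.powersetCard k (Finset.univ : Finset (Fin m)) := by
    intro f hf
    rw [Finset.mem_powersetCard]
    refine ⟨Finset.filter_subset _ _, ?_⟩
    have hs : (∑ i, if f i then (1 : ℤ) else -1) = n := by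
      simpa [rwA] using hf
    rw [sum_eq_card] at hs
    omega
  calc (rwA m n).card ≤ (Finset.powersetCard k (Finset.univ : Finset (Fin m))).card := by
        apply Finset.card_le_card_of_injOn (fun f => Finset.univ.filter fun i => f i = true) (fun f hf => hsub f hf)
        intro f _ g _ hfg
        funext i
        have := Finset.ext_iff.1 hfg i
        simp only [Finset.mem_filter, Finset.mem_univ, true_and] at this
        by_cases hfi : f i <;> by_cases hgi : g i <;> simp_all
    _ = m.choose k := by rw [Finset.card_powersetCard, Finset.card_univ, Fintype.card_fin]
    _ ≤ m.choose (m/2) := Nat.choose_le_middle _ _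

lemma rwA_card_sq (m : ℕ) (n : ℤ) : (rwA m n).card ^ 2 * (m + 1) ≤ 2 * 4 ^ m :=
  calc (rwA m n).card ^ 2 * (m + 1) ≤ (m.choose (m/2))^2 * (m+1) :=
        Nat.mul_le_mul_right _ (Nat.pow_le_pow_left (rwA_card_le m n) 2)
    _ ≤ 2 * 4^m := middle_sq_le m

lemma rwG_nonneg (m : ℕ) (n : ℤ) : 0 ≤ rwG m n := by
  rw [rwG_eq]; positivity

lemma rwG_le (m : ℕ) (n : ℤ) :
    rwG m n ≤ Real.sqrt 2 / Real.sqrt (m + 1) := by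
  have hsq : (rwG m n)^2 * (m+1) ≤ 2 := by
    rw [rwG_eq]
    have h := rwA_card_sq m n
    have h4 : ((2:ℝ)^m)^2 = 4^m := by
      rw [← pow_mul, show (4:ℝ) = 2^2 by norm_num, ← pow_mul, Nat.mul_comm]
    have hc : (((rwA m n).card:ℝ))^2 * (m+1) ≤ 2 * 4^m := by exact_mod_cast h
    rw [div_pow, h4, div_mul_eq_mul_div, div_le_iff₀ (by positivity)]
    linarith
  have h1 : (0:ℝ) < m + 1 := by positivity
  have h2 : (rwG m n)^2 ≤ 2 / (m+1) := by
    rw [le_div_iff₀ h1]; linarith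
  calc rwG m n = Real.sqrt ((rwG m n)^2) := by
        rw [Real.sqrt_sq (rwG_nonneg m n)]
    _ ≤ Real.sqrt (2 / (m+1)) := Real.sqrt_le_sqrt h2
    _ = Real.sqrt 2 / Real.sqrt (m+1) := Real.sqrt_div (by norm_num) _

lemma sum_rwA_card_le (m : ℕ) (s : Finset ℤ) : ∑ n ∈ s, (rwA m n).card ≤ 2^m := by
  classical
  have hdisj : ∀ n ∈ s, ∀ n' ∈ s, n ≠ n' → Disjoint (rwA m n) (rwA m n') := by
    intro n _ n' _ hnn'
    rw [Finset.disjoint_left]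
    intro f hf hf'
    simp only [rwA, Finset.mem_filter, Finset.mem_univ, true_and] at hf hf'
    exact hnn' (hf.symm.trans hf')
  calc ∑ n ∈ s, (rwA m n).card = (s.biUnion (rwA m)).card := (Finset.card_biUnion hdisj).symm
    _ ≤ Fintype.card (Fin m → Bool) := Finset.card_le_univ _
    _ = 2^m := by simp

lemma tsum_rwG_le (m : ℕ) : ∑' n : ℤ, ENNReal.ofReal (rwG m n) ≤ 1 := by
  rw [ENNReal.tsum_eq_iSup_sum]
  refine iSup_le fun s => ?_
  have h1 : ∑ n ∈ s, ENNReal.ofReal (rwG m n) = ENNReal.ofReal (∑ n ∈ s, rwG m n) :=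
    (ENNReal.ofReal_sum_of_nonneg fun n _ => rwG_nonneg m n).symm
  rw [h1]
  have h2 : ∑ n ∈ s, rwG m n ≤ 1 := by
    have : ∑ n ∈ s, rwG m n = ((∑ n ∈ s, (rwA m n).card : ℕ) : ℝ) / 2^m := by
      push_cast
      rw [Finset.sum_div]
      exact Finset.sum_congr rfl fun n _ => rwG_eq m n
    rw [this, div_le_one (by positivity)]
    have := sum_rwA_card_le m s
    exact_mod_cast le_trans (Nat.cast_le.2 this) (by norm_num)
  calc ENNReal.ofReal (∑ n ∈ s, rwG m n) ≤ ENNReal.ofReal 1 := ENNReal.ofReal_le_ofReal h2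
    _ = 1 := ENNReal.ofReal_one

lemma tsum_rwG_comp_le (m : ℕ) (e : ℤ → ℤ) (he : Function.Injective e) :
    ∑' k : ℤ, ENNReal.ofReal (rwG m (e k)) ≤ 1 :=
  le_trans (ENNReal.tsum_comp_le_tsum_of_injective he fun n => ENNReal.ofReal (rwG m n))
    (tsum_rwG_le m)

lemma floor_set_eq (L : ℝ) (hL : 0 < L) (k : ℤ) :
    {y : ℝ | ⌊y / L⌋ = k} = Set.Ico (k * L) ((k+1) * L) := by
  ext y
  simp only [Set.mem_setOf_eq, Set.mem_Ico, Int.floor_eq_iff]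
  constructor
  · rintro ⟨h1, h2⟩
    constructor
    · rwa [← le_div_iff₀ hL]
    · rw [← div_lt_iff₀ hL]; push_cast at h2 ⊢; linarith
  · rintro ⟨h1, h2⟩
    constructor
    · rwa [le_div_iff₀ hL]
    · rw [div_lt_iff₀ hL]; push_cast at h2 ⊢; linarith

lemma lintegral_floor_div (L : ℝ) (hL : 0 < L) (g : ℤ → ENNReal) :
    ∫⁻ y : ℝ, g ⌊y / L⌋ = ∑' k : ℤ, g k * ENNReal.ofReal L := by
  have hmeas : ∀ k : ℤ, MeasurableSet {y : ℝ | ⌊y / L⌋ = k} := fun k =>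
    ((measurable_id.div_const L).floor) (measurableSet_singleton k)
  have hunion : (Set.univ : Set ℝ) = ⋃ k : ℤ, {y : ℝ | ⌊y / L⌋ = k} := by
    ext y; simp
  have hdisj : Pairwise (Function.onFun Disjoint fun k : ℤ => {y : ℝ | ⌊y / L⌋ = k}) := by
    intro k j hkj
    refine Set.disjoint_left.2 ?_
    rintro y (hy : _ = k) (hy' : _ = j); exact hkj (hy.symm.trans hy')
  calc ∫⁻ y, g ⌊y/L⌋ = ∫⁻ y in ⋃ k : ℤ, {y : ℝ | ⌊y / L⌋ = k}, g ⌊y/L⌋ := by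
        rw [← hunion, Measure.restrict_univ]
    _ = ∑' k : ℤ, ∫⁻ y in {y : ℝ | ⌊y / L⌋ = k}, g ⌊y/L⌋ := lintegral_iUnion hmeas hdisj _
    _ = ∑' k : ℤ, g k * ENNReal.ofReal L := by
        refine tsum_congr fun k => ?_
        rw [setLIntegral_congr_fun_ae (hmeas k) (ae_of_all _ fun y hy => by rw [(hy : _ = k)]),
          setLIntegral_const, floor_set_eq L hL k, Real.volume_Ico]
        congr 1
        ring

lemma rwDensity_nonneg (h t x : ℝ) (σ : ℤ) (y : ℝ) (hh : 0 < h) :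
    0 ≤ rwDensity h t x σ y := by
  unfold rwDensity
  exact mul_nonneg (by positivity) (rwG_nonneg _ _)

lemma measurable_rwDensity (h t x : ℝ) (σ : ℤ) : Measurable (rwDensity h t x σ) := by
  unfold rwDensity
  refine measurable_const.mul ?_
  exact Measurable.comp (f := fun y : ℝ => ⌊y / (2 * Real.sqrt h)⌋)
    (g := fun k : ℤ => rwG (⌊t / h⌋).toNat
      (2 * (⌊x / (2 * Real.sqrt h)⌋ - k) + σ * altTau ⌊t / h⌋))
    measurable_from_top ((measurable_id.div_const _).floor)

lemma lintegral_rwDensity_le (h t x : ℝ) (hh : 0 < h) (σ : ℤ) :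
    ∫⁻ y : ℝ, ENNReal.ofReal (rwDensity h t x σ y) ≤ 1 := by
  have hsh : 0 < Real.sqrt h := Real.sqrt_pos.2 hh
  have hL : 0 < 2 * Real.sqrt h := by linarith
  set L := 2 * Real.sqrt h with hLdef
  set m := (⌊t / h⌋).toNat with hm
  set e : ℤ → ℤ := fun k => 2 * (⌊x / L⌋ - k) + σ * altTau ⌊t / h⌋ with he
  have h1 : ∀ y : ℝ, ENNReal.ofReal (rwDensity h t x σ y)
      = (fun k : ℤ => ENNReal.ofReal (1 / L * rwG m (e k))) ⌊y / L⌋ := fun y => rfl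
  calc ∫⁻ y, ENNReal.ofReal (rwDensity h t x σ y)
      = ∑' k : ℤ, ENNReal.ofReal (1 / L * rwG m (e k)) * ENNReal.ofReal L := by
        rw [← lintegral_floor_div L hL]
        exact lintegral_congr h1
    _ = ∑' k : ℤ, ENNReal.ofReal (rwG m (e k)) := by
        refine tsum_congr fun k => ?_
        rw [← ENNReal.ofReal_mul (mul_nonneg (by positivity) (rwG_nonneg _ _))]
        congr 1
        field_simp
    _ ≤ 1 := tsum_rwG_comp_le m e (fun a b hab => by
        simp only [he] at hab; omega)

lemma rwDensity_le (h t x : ℝ) (hh : 0 < h) (ht : 0 < t) (σ : ℤ) (y : ℝ) :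
    rwDensity h t x σ y ≤ (Real.sqrt t)⁻¹ := by
  have hsh : 0 < Real.sqrt h := Real.sqrt_pos.2 hh
  have hst : 0 < Real.sqrt t := Real.sqrt_pos.2 ht
  set m := (⌊t / h⌋).toNat with hm
  have hmt : t ≤ h * (m + 1) := by
    have h0 : (0:ℤ) ≤ ⌊t/h⌋ := Int.floor_nonneg.2 (by positivity)
    have hcast : ((m : ℝ)) = ((⌊t/h⌋ : ℤ) : ℝ) := by
      rw [hm]; exact_mod_cast Int.toNat_of_nonneg h0
    have h2 : t/h - 1 < (⌊t/h⌋ : ℝ) := Int.sub_one_lt_floor _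
    have h3 : t/h ≤ (m : ℝ) + 1 := by push_cast at hcast ⊢; linarith
    calc t = h * (t/h) := by field_simp
      _ ≤ h * ((m:ℝ) + 1) := by
          exact mul_le_mul_of_nonneg_left h3 hh.le
  have hm1 : (0:ℝ) < (m:ℝ) + 1 := by positivity
  have hsqle : Real.sqrt t ≤ Real.sqrt h * Real.sqrt ((m:ℝ)+1) := by
    rw [← Real.sqrt_mul hh.le]
    exact Real.sqrt_le_sqrt hmt
  have hG : rwG m (2 * (⌊x / (2 * Real.sqrt h)⌋ - ⌊y / (2 * Real.sqrt h)⌋) + σ * altTau ⌊t / h⌋)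
      ≤ Real.sqrt 2 / Real.sqrt ((m:ℝ)+1) := by
    have := rwG_le m (2 * (⌊x / (2 * Real.sqrt h)⌋ - ⌊y / (2 * Real.sqrt h)⌋) + σ * altTau ⌊t / h⌋)
    push_cast at this ⊢
    exact this
  have hsm : 0 < Real.sqrt ((m:ℝ)+1) := Real.sqrt_pos.2 hm1
  calc rwDensity h t x σ y
      ≤ 1 / (2 * Real.sqrt h) * (Real.sqrt 2 / Real.sqrt ((m:ℝ)+1)) := by
        unfold rwDensity
        rw [hm] at hG ⊢
        exact mul_le_mul_of_nonneg_left hG (by positivity)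
    _ = Real.sqrt 2 / (2 * (Real.sqrt h * Real.sqrt ((m:ℝ)+1))) := by
        field_simp
    _ ≤ 2 / (2 * Real.sqrt t) := by
        apply div_le_div₀ (by positivity) ?_ (by positivity) ?_
        · nlinarith [Real.sq_sqrt (show (0:ℝ) ≤ 2 by norm_num), Real.sqrt_nonneg 2]
        · exact mul_le_mul_of_nonneg_left hsqle (by norm_num)
    _ = (Real.sqrt t)⁻¹ := by
        field_simp

lemma lintegral_rpow_Ioc (R α : ℝ) (hR : 0 < R) (hα1 : -1 < α) (hα0 : α ≠ 0) :
    ∫⁻ u in Set.Ioc 0 R, ENNReal.ofReal (u ^ α) = ENNReal.ofReal (R ^ (α+1) / (α+1)) := by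
  have hint : IntegrableOn (fun u : ℝ => u ^ α) (Set.Ioc 0 R) := by
    have h1 := intervalIntegral.intervalIntegrable_rpow' (a := 0) (b := R) hα1
    rwa [intervalIntegrable_iff_integrableOn_Ioc_of_le hR.le] at h1
  have hnn : 0 ≤ᵐ[volume.restrict (Set.Ioc (0:ℝ) R)] fun u : ℝ => u ^ α :=
    (ae_restrict_iff' measurableSet_Ioc).2 (ae_of_all _ fun u hu => Real.rpow_nonneg hu.1.le α)
  rw [← ofReal_integral_eq_lintegral_ofReal hint hnn]
  congr 1
  have h2 : ∫ u in Set.Ioc (0:ℝ) R, u ^ α = ∫ u in (0:ℝ)..R, u ^ α := by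
    rw [intervalIntegral.integral_of_le hR.le]
  rw [h2, integral_rpow (Or.inl hα1), Real.zero_rpow (by intro hc; exact hα0 (by linarith))]
  ring

/-- A measurable kernel agreeing with `u ^ α` for `u ≥ 0`. -/
noncomputable def rpowKer (α : ℝ) (u : ℝ) : ENNReal :=
  if u = 0 then 0 else ENNReal.ofReal (Real.exp (Real.log u * α))

lemma measurable_rpowKer (α : ℝ) : Measurable (rpowKer α) := by
  unfold rpowKer
  refine Measurable.ite ?_ measurable_const
    ((Real.measurable_exp.comp (Real.measurable_log.mul_const α)).ennreal_ofReal)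
  rw [show {u : ℝ | u = 0} = {(0:ℝ)} from Set.setOf_eq_eq_singleton]
  exact measurableSet_singleton 0

lemma rpowKer_eq (α : ℝ) (hα0 : α ≠ 0) (u : ℝ) (hu : 0 ≤ u) :
    rpowKer α u = ENNReal.ofReal (u ^ α) := by
  unfold rpowKer
  rcases eq_or_lt_of_le hu with h0 | h0
  · rw [if_pos h0.symm, ← h0, Real.zero_rpow hα0, ENNReal.ofReal_zero]
  · rw [if_neg (ne_of_gt h0), Real.rpow_def_of_pos h0]

lemma lintegral_abs_rpow_window (y R α : ℝ) (hR : 0 < R) (hα1 : -1 < α) (hα0 : α < 0) :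
    ∫⁻ z in Set.Icc (y - R) (y + R), ENNReal.ofReal (|y - z| ^ α)
      ≤ 2 * ENNReal.ofReal (R ^ (α+1) / (α+1)) := by
  have hαne : α ≠ 0 := ne_of_lt hα0
  set f : ℝ → ENNReal := (Set.Icc (0:ℝ) R).indicator (rpowKer α) with hf
  set f' : ℝ → ENNReal := (Set.Ioc (0:ℝ) R).indicator (rpowKer α) with hf'
  have hfm : Measurable f := (measurable_rpowKer α).indicator measurableSet_Icc
  have hf'm : Measurable f' := (measurable_rpowKer α).indicator measurableSet_Ioc
  have hIccIoc : volume.restrict (Set.Icc (0:ℝ) R) = volume.restrict (Set.Ioc (0:ℝ) R) :=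
    (Measure.restrict_congr_set Ioc_ae_eq_Icc).symm
  have hker : ∫⁻ u in Set.Ioc (0:ℝ) R, rpowKer α u = ENNReal.ofReal (R ^ (α+1) / (α+1)) := by
    rw [setLIntegral_congr_fun_ae measurableSet_Ioc
      (ae_of_all _ fun u hu => rpowKer_eq α hαne u hu.1.le)]
    exact lintegral_rpow_Ioc R α hR hα1 hαne
  have hval : ∫⁻ u, f u = ENNReal.ofReal (R ^ (α+1) / (α+1)) := by
    rw [hf, lintegral_indicator measurableSet_Icc _, hIccIoc, hker]
  have hval' : ∫⁻ u, f' u = ENNReal.ofReal (R ^ (α+1) / (α+1)) := by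
    rw [hf', lintegral_indicator measurableSet_Ioc _, hker]
  have hsub : Set.Icc (y - R) (y + R) ⊆ Set.Ico (y - R) y ∪ Set.Icc y (y + R) := by
    intro z hz
    rcases lt_or_ge z y with hzy | hzy
    · exact Or.inl ⟨hz.1, hzy⟩
    · exact Or.inr ⟨hzy, hz.2⟩
  have hmono : ∫⁻ z in Set.Icc (y - R) (y + R), ENNReal.ofReal (|y - z| ^ α)
      ≤ ∫⁻ z in Set.Ico (y - R) y ∪ Set.Icc y (y + R), ENNReal.ofReal (|y - z| ^ α) :=
    lintegral_mono' (Measure.restrict_mono hsub le_rfl) le_rfl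
  have hunion : ∫⁻ z in Set.Ico (y - R) y ∪ Set.Icc y (y + R), ENNReal.ofReal (|y - z| ^ α)
      ≤ (∫⁻ z in Set.Ico (y - R) y, ENNReal.ofReal (|y - z| ^ α))
        + ∫⁻ z in Set.Icc y (y + R), ENNReal.ofReal (|y - z| ^ α) :=
    lintegral_union_le _ _ _
  have hright : ∫⁻ z in Set.Icc y (y + R), ENNReal.ofReal (|y - z| ^ α)
      = ENNReal.ofReal (R ^ (α+1) / (α+1)) := by
    have hcong : ∀ z : ℝ, (Set.Icc y (y + R)).indicator
        (fun z => ENNReal.ofReal (|y - z| ^ α)) z = f (z - y) := by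
      intro z
      by_cases hz : z ∈ Set.Icc y (y + R)
      · have hz' : z - y ∈ Set.Icc (0:ℝ) R := ⟨by linarith [hz.1], by linarith [hz.2]⟩
        rw [Set.indicator_of_mem hz, hf, Set.indicator_of_mem hz',
          rpowKer_eq α hαne _ hz'.1]
        congr 2
        rw [abs_sub_comm, abs_of_nonneg (by linarith [hz.1])]
      · have hz' : z - y ∉ Set.Icc (0:ℝ) R := by
          simp only [Set.mem_Icc] at hz ⊢
          intro hc; exact hz ⟨by linarith [hc.1], by linarith [hc.2]⟩
        rw [Set.indicator_of_notMem hz, hf, Set.indicator_of_notMem hz']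
    rw [← lintegral_indicator measurableSet_Icc _, lintegral_congr hcong,
      lintegral_sub_right_eq_self f y]
    exact hval
  have hleft : ∫⁻ z in Set.Ico (y - R) y, ENNReal.ofReal (|y - z| ^ α)
      = ENNReal.ofReal (R ^ (α+1) / (α+1)) := by
    have hcong : ∀ z : ℝ, (Set.Ico (y - R) y).indicator
        (fun z => ENNReal.ofReal (|y - z| ^ α)) z = f' (y - z) := by
      intro z
      by_cases hz : z ∈ Set.Ico (y - R) y
      · have hz' : y - z ∈ Set.Ioc (0:ℝ) R := ⟨by linarith [hz.2], by linarith [hz.1]⟩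
        rw [Set.indicator_of_mem hz, hf', Set.indicator_of_mem hz',
          rpowKer_eq α hαne _ hz'.1.le]
        congr 2
        rw [abs_of_nonneg (by linarith [hz.2])]
      · have hz' : y - z ∉ Set.Ioc (0:ℝ) R := by
          simp only [Set.mem_Ico, Set.mem_Ioc] at hz ⊢
          intro hc; exact hz ⟨by linarith [hc.2], by linarith [hc.1]⟩
        rw [Set.indicator_of_notMem hz, hf', Set.indicator_of_notMem hz']
    rw [← lintegral_indicator measurableSet_Ico _, lintegral_congr hcong]
    have hneg : ∫⁻ z : ℝ, f' (y - z) = ∫⁻ w : ℝ, f' (w + y) := by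
      have h3 : ∀ z : ℝ, f' (y - z) = (fun w : ℝ => f' (w + y)) (-z) := by
        intro z; simp only [neg_add_eq_sub]
      rw [lintegral_congr h3]
      exact (Measure.measurePreserving_neg (volume : Measure ℝ)).lintegral_comp
        (hf'm.comp (measurable_id.add_const y))
    rw [hneg, lintegral_add_right_eq_self (fun w => f' w) y]
    exact hval'
  calc ∫⁻ z in Set.Icc (y - R) (y + R), ENNReal.ofReal (|y - z| ^ α)
      ≤ _ + _ := hmono.trans hunion
    _ = ENNReal.ofReal (R ^ (α+1) / (α+1)) + ENNReal.ofReal (R ^ (α+1) / (α+1)) := by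
        rw [hleft, hright]
    _ = 2 * ENNReal.ofReal (R ^ (α+1) / (α+1)) := (two_mul _).symm


/-- **Uniform `ℋ*`-norm bound for the rescaled random-walk density.**
Fix `H* ∈ (1/2, 1)`. There is a constant `C > 0`, depending only on `H*`, such that for all
`h > 0`, `t > 0`, `x ∈ ℝ` and both signs `σ ∈ {+1, -1}`,
`H*(2H*-1) ∫∫ |y-z|^{2H*-2} F(y) F(z) dy dz ≤ C t^{H*-1}`. -/
theorem rw_density_Hs_norm_bound (Hs : ℝ) (hHs1 : 1 / 2 < Hs) (hHs2 : Hs < 1) :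
    ∃ C > 0, ∀ h t x : ℝ, 0 < h → 0 < t → ∀ σ : ℤ, σ = 1 ∨ σ = -1 →
      (∫⁻ y : ℝ, ∫⁻ z : ℝ, ENNReal.ofReal
          (Hs * (2 * Hs - 1) * |y - z| ^ (2 * Hs - 2) *
            rwDensity h t x σ y * rwDensity h t x σ z))
        ≤ ENNReal.ofReal (C * t ^ (Hs - 1)) := by
  refine ⟨3, by norm_num, ?_⟩
  intro h t x hh ht σ hσ
  set K : ℝ := Hs * (2 * Hs - 1) with hK
  set α : ℝ := 2 * Hs - 2 with hα
  have hα1 : (-1:ℝ) < α := by rw [hα]; linarith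
  have hα0 : α < 0 := by rw [hα]; linarith
  have hα1' : α + 1 = 2 * Hs - 1 := by rw [hα]; ring
  have hα1pos : 0 < α + 1 := by rw [hα1']; linarith
  have hK0 : 0 < K := by
    rw [hK]; exact mul_pos (by linarith) (by linarith)
  have hK1 : K ≤ 1 := by rw [hK]; nlinarith
  set F := rwDensity h t x σ with hF
  have hF0 : ∀ y, 0 ≤ F y := fun y => rwDensity_nonneg h t x σ y hh
  have hFm : Measurable F := measurable_rwDensity h t x σ
  have hFi : ∫⁻ y, ENNReal.ofReal (F y) ≤ 1 := lintegral_rwDensity_le h t x hh σ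
  set R := Real.sqrt t with hR
  have hR0 : 0 < R := Real.sqrt_pos.2 ht
  have hFs : ∀ y, F y ≤ R⁻¹ := fun y => rwDensity_le h t x hh ht σ y
  have hRα : R ^ α = t ^ (Hs - 1) := by
    rw [hR, Real.sqrt_eq_rpow, ← Real.rpow_mul ht.le]
    congr 1
    rw [hα]; ring
  have hRinv : R⁻¹ * R ^ (α + 1) = t ^ (Hs - 1) := by
    rw [← Real.rpow_neg_one R, ← Real.rpow_add hR0, ← hRα]
    congr 1
    ring
  have htpow : (0:ℝ) ≤ t ^ (Hs - 1) := Real.rpow_nonneg ht.le _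
  -- the inner integral bound
  have hinner : ∀ y : ℝ, (∫⁻ z : ℝ, ENNReal.ofReal (K * |y - z| ^ α * F z))
      ≤ ENNReal.ofReal (3 * t ^ (Hs - 1)) := by
    intro y
    set A : Set ℝ := Set.Icc (y - R) (y + R) with hA
    have hAm : MeasurableSet A := measurableSet_Icc
    rw [← lintegral_add_compl (fun z => ENNReal.ofReal (K * |y - z| ^ α * F z)) hAm]
    have hnear : (∫⁻ z in A, ENNReal.ofReal (K * |y - z| ^ α * F z))
        ≤ ENNReal.ofReal (2 * t ^ (Hs - 1)) := by
      have step1 : (∫⁻ z in A, ENNReal.ofReal (K * |y - z| ^ α * F z))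
          ≤ ∫⁻ z in A, ENNReal.ofReal (K * R⁻¹) * ENNReal.ofReal (|y - z| ^ α) := by
        refine lintegral_mono fun z => ?_
        rw [← ENNReal.ofReal_mul (by positivity)]
        refine ENNReal.ofReal_le_ofReal ?_
        have habs : (0:ℝ) ≤ |y - z| ^ α := Real.rpow_nonneg (abs_nonneg _) _
        calc K * |y - z| ^ α * F z ≤ K * |y - z| ^ α * R⁻¹ :=
              mul_le_mul_of_nonneg_left (hFs z) (by positivity)
          _ = K * R⁻¹ * |y - z| ^ α := by ring
      have step2 : (∫⁻ z in A, ENNReal.ofReal (K * R⁻¹) * ENNReal.ofReal (|y - z| ^ α))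
          = ENNReal.ofReal (K * R⁻¹) * ∫⁻ z in A, ENNReal.ofReal (|y - z| ^ α) :=
        lintegral_const_mul' _ _ ENNReal.ofReal_ne_top
      have step3 := lintegral_abs_rpow_window y R α hR0 hα1 hα0
      have step4 : ENNReal.ofReal (K * R⁻¹) * (2 * ENNReal.ofReal (R ^ (α+1) / (α+1)))
          ≤ ENNReal.ofReal (2 * t ^ (Hs - 1)) := by
        have hS : (0:ℝ) ≤ R ^ (α+1) / (α+1) := by positivity
        have hKα : K = Hs * (α+1) := by rw [hK, hα1']
        have hne : α + 1 ≠ 0 := ne_of_gt hα1pos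
        have e1 : K * R⁻¹ * (R ^ (α+1) / (α+1)) = Hs * t ^ (Hs - 1) := by
          have e2 : K * R⁻¹ * (R ^ (α+1) / (α+1)) = Hs * (R⁻¹ * R ^ (α+1)) := by
            rw [hKα]
            field_simp
          rw [e2, hRinv]
        calc ENNReal.ofReal (K * R⁻¹) * (2 * ENNReal.ofReal (R ^ (α+1) / (α+1)))
            = 2 * (ENNReal.ofReal (K * R⁻¹) * ENNReal.ofReal (R ^ (α+1) / (α+1))) := by ring
          _ = 2 * ENNReal.ofReal (K * R⁻¹ * (R ^ (α+1) / (α+1))) := by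
              rw [← ENNReal.ofReal_mul (by positivity)]
          _ = 2 * ENNReal.ofReal (Hs * t ^ (Hs - 1)) := by rw [e1]
          _ = ENNReal.ofReal 2 * ENNReal.ofReal (Hs * t ^ (Hs - 1)) := by
              norm_num
          _ = ENNReal.ofReal (2 * (Hs * t ^ (Hs - 1))) := by
              rw [← ENNReal.ofReal_mul (by norm_num)]
          _ ≤ ENNReal.ofReal (2 * t ^ (Hs - 1)) := by
              refine ENNReal.ofReal_le_ofReal ?_
              nlinarith
      calc (∫⁻ z in A, ENNReal.ofReal (K * |y - z| ^ α * F z))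
          ≤ ENNReal.ofReal (K * R⁻¹) * ∫⁻ z in A, ENNReal.ofReal (|y - z| ^ α) := by
            rw [← step2]; exact step1
        _ ≤ ENNReal.ofReal (K * R⁻¹) * (2 * ENNReal.ofReal (R ^ (α+1) / (α+1))) :=
            mul_le_mul_right step3 _
        _ ≤ ENNReal.ofReal (2 * t ^ (Hs - 1)) := step4
    have hfar : (∫⁻ z in Aᶜ, ENNReal.ofReal (K * |y - z| ^ α * F z))
        ≤ ENNReal.ofReal (t ^ (Hs - 1)) := by
      have step1 : (∫⁻ z in Aᶜ, ENNReal.ofReal (K * |y - z| ^ α * F z))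
          ≤ ∫⁻ z in Aᶜ, ENNReal.ofReal (K * R ^ α * F z) := by
        refine setLIntegral_mono ((measurable_const.mul hFm).ennreal_ofReal) fun z hz => ?_
        refine ENNReal.ofReal_le_ofReal ?_
        have hzR : R ≤ |y - z| := by
          simp only [hA, Set.mem_compl_iff, Set.mem_Icc, not_and_or, not_le] at hz
          rcases hz with h1 | h1
          · rw [abs_of_nonneg (by linarith)]; linarith
          · rw [abs_of_nonpos (by linarith)]; linarith
        have hrp : |y - z| ^ α ≤ R ^ α :=
          Real.rpow_le_rpow_of_nonpos hR0 hzR hα0.le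
        have := mul_le_mul_of_nonneg_left hrp hK0.le
        exact mul_le_mul_of_nonneg_right this (hF0 z)
      have step2 : (∫⁻ z in Aᶜ, ENNReal.ofReal (K * R ^ α * F z))
          ≤ ∫⁻ z : ℝ, ENNReal.ofReal (K * R ^ α * F z) :=
        setLIntegral_le_lintegral _ _
      have step3 : (∫⁻ z : ℝ, ENNReal.ofReal (K * R ^ α * F z))
          = ENNReal.ofReal (K * R ^ α) * ∫⁻ z : ℝ, ENNReal.ofReal (F z) := by
        rw [← lintegral_const_mul' _ _ ENNReal.ofReal_ne_top]
        refine lintegral_congr fun z => ?_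
        rw [← ENNReal.ofReal_mul (by positivity), mul_assoc]
      have step4 : ENNReal.ofReal (K * R ^ α) * (∫⁻ z : ℝ, ENNReal.ofReal (F z))
          ≤ ENNReal.ofReal (K * R ^ α) * 1 := mul_le_mul_right hFi _
      calc (∫⁻ z in Aᶜ, ENNReal.ofReal (K * |y - z| ^ α * F z))
          ≤ ENNReal.ofReal (K * R ^ α) * (∫⁻ z : ℝ, ENNReal.ofReal (F z)) := by
            rw [← step3]; exact step1.trans step2
        _ ≤ ENNReal.ofReal (K * R ^ α) * 1 := step4
        _ = ENNReal.ofReal (K * R ^ α) := mul_one _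
        _ ≤ ENNReal.ofReal (t ^ (Hs - 1)) := by
            refine ENNReal.ofReal_le_ofReal ?_
            rw [hRα]
            nlinarith
    calc (∫⁻ z in A, ENNReal.ofReal (K * |y - z| ^ α * F z))
          + ∫⁻ z in Aᶜ, ENNReal.ofReal (K * |y - z| ^ α * F z)
        ≤ ENNReal.ofReal (2 * t ^ (Hs - 1)) + ENNReal.ofReal (t ^ (Hs - 1)) :=
          add_le_add hnear hfar
      _ = ENNReal.ofReal (3 * t ^ (Hs - 1)) := by
          rw [← ENNReal.ofReal_add (by positivity) htpow]
          congr 1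
          ring
  -- assemble
  calc (∫⁻ y : ℝ, ∫⁻ z : ℝ, ENNReal.ofReal (K * |y - z| ^ α * F y * F z))
      = ∫⁻ y : ℝ, ENNReal.ofReal (F y) * ∫⁻ z : ℝ, ENNReal.ofReal (K * |y - z| ^ α * F z) := by
        refine lintegral_congr fun y => ?_
        rw [← lintegral_const_mul' _ _ ENNReal.ofReal_ne_top]
        refine lintegral_congr fun z => ?_
        rw [← ENNReal.ofReal_mul (hF0 y)]
        congr 1
        ring
    _ ≤ ∫⁻ y : ℝ, ENNReal.ofReal (F y) * ENNReal.ofReal (3 * t ^ (Hs - 1)) :=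
        lintegral_mono fun y => mul_le_mul_right (hinner y) _
    _ = (∫⁻ y : ℝ, ENNReal.ofReal (F y)) * ENNReal.ofReal (3 * t ^ (Hs - 1)) :=
        lintegral_mul_const' _ _ ENNReal.ofReal_ne_top
    _ ≤ 1 * ENNReal.ofReal (3 * t ^ (Hs - 1)) := mul_le_mul_left hFi _
    _ = ENNReal.ofReal (3 * t ^ (Hs - 1)) := one_mul _
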